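/- Let M be a connected topological space with a Borel measure μ and let Ω : M × M → ℂ be continuous and satisfy propagator conditions (1)–(5). Let P_Ω be the associated orthogonal projection on L²(M, μ) and, for z ∈ M, let q_z be the coherent-state projection. If V ⊆ L²(M, μ) is a closed subspace contained in the range of P_Ω and invariant under q_z for every z ∈ M (q_z(V) ⊆ V), then V = {0} or V equals the range of P_Ω. In other words, the range of P_Ω is an irreducible representation of the family {q_z : z ∈ M}. -/

import Mathlib

open MeasureTheory Filter
open scoped ENNReal

/-- Let `Ω` be a continuous propagator (conditions (1)–(5)) on a
connected topological space with a Borel measure, let `P` be the associated orthogonal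
projection on `L²(M,μ)` and `qz z` the coherent-state projections. Any closed subspace
`V` of `L²(M,μ)` contained in the range of `P` and invariant under all `qz z` is `{0}`
or the whole range of `P`: the physical Hilbert space is an irreducible representation
of the coherent-state projections. -/
theorem physical_space_irreducible
    {M : Type*} [TopologicalSpace M] [ConnectedSpace M]
    [MeasurableSpace M] [BorelSpace M]
    (μ : Measure M)
    (Ω : M → M → ℂ)
    (hΩcont : Continuous fun p : M × M => Ω p.1 p.2)
    (h1 : ∀ x, Ω x x = 1)
    (h2 : ∀ x y, x ≠ y → ‖Ω x y‖ < 1)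
    (h3 : ∀ x y, Ω x y = (starRingEnd ℂ) (Ω y x))
    (h4int : ∀ x y, Integrable (fun z => Ω x z * Ω z y) μ)
    (h4 : ∀ x y, ∫ z, Ω x z * Ω z y ∂μ = Ω x y)
    (h5 : ∃ C : ℝ, ∀ x, Integrable (fun y => ‖Ω x y‖) μ ∧ (∫ y, ‖Ω x y‖ ∂μ) ≤ C)
    (P : Lp ℂ 2 μ →L[ℂ] Lp ℂ 2 μ)
    (hP : ∀ Ψ : Lp ℂ 2 μ, ∀ᵐ x ∂μ, (P Ψ) x = ∫ y, Ψ y * Ω y x ∂μ)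
    (qz : M → (Lp ℂ 2 μ →L[ℂ] Lp ℂ 2 μ))
    (hqz : ∀ z, ∀ Ψ : Lp ℂ 2 μ, ∀ᵐ y ∂μ,
      (qz z Ψ) y = (∫ w, Ψ w * Ω w z ∂μ) * Ω z y) :
    ∀ V : Submodule ℂ (Lp ℂ 2 μ), IsClosed (V : Set (Lp ℂ 2 μ)) →
      V ≤ LinearMap.range (P : Lp ℂ 2 μ →ₗ[ℂ] Lp ℂ 2 μ) → (∀ z : M, ∀ ψ ∈ V, qz z ψ ∈ V) →
      V = ⊥ ∨ V = LinearMap.range (P : Lp ℂ 2 μ →ₗ[ℂ] Lp ℂ 2 μ) := by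
  intro V hVc hVP hVinv
  obtain ⟨C, h5'⟩ := h5
  -- Basic facts about Ω
  have hΩ_le_one : ∀ x y, ‖Ω x y‖ ≤ 1 := by
    intro x y
    rcases eq_or_ne x y with rfl | h
    · simp [h1]
    · exact (h2 x y h).le
  have hnorm_symm : ∀ x y, ‖Ω x y‖ = ‖Ω y x‖ := by
    intro x y; rw [h3 x y]; exact RCLike.norm_conj _
  have hΩmeas : ∀ x, AEStronglyMeasurable (fun y => Ω x y) μ :=
    fun x => (hΩcont.comp (Continuous.prodMk_right x)).aestronglyMeasurable
  have hΩmeas' : ∀ y, AEStronglyMeasurable (fun x => Ω x y) μ :=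
    fun y => (hΩcont.comp (continuous_id.prodMk continuous_const)).aestronglyMeasurable
  have hΩnorm_int' : ∀ z, Integrable (fun w => ‖Ω w z‖) μ := by
    intro z
    refine (h5' z).1.congr (Eventually.of_forall fun w => ?_)
    exact hnorm_symm z w
  have hsq_le : ∀ (c : ℂ), ‖c‖ ≤ 1 → ‖c‖ ^ 2 ≤ ‖c‖ := by
    intro c hc
    calc ‖c‖ ^ 2 = ‖c‖ * ‖c‖ := sq ‖c‖
    _ ≤ 1 * ‖c‖ := mul_le_mul_of_nonneg_right hc (norm_nonneg c)
    _ = ‖c‖ := one_mul _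
  -- the coherent states as L² elements
  have hΩmem2' : ∀ z, MemLp (fun y => Ω z y) 2 μ := by
    intro z
    rw [memLp_two_iff_integrable_sq_norm (hΩmeas z)]
    refine (h5' z).1.mono' ?_ (Eventually.of_forall fun y => ?_)
    · have := (hΩmeas z).norm.mul (hΩmeas z).norm
      simpa [sq, Pi.mul_def] using this
    · rw [Real.norm_of_nonneg (by positivity)]
      exact hsq_le _ (hΩ_le_one z y)
  set Ωlp : M → Lp ℂ 2 μ := fun z => (hΩmem2' z).toLp _ with hΩlpdef
  have hΩlp_coe : ∀ z, (Ωlp z : M → ℂ) =ᵐ[μ] fun y => Ω z y :=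
    fun z => MemLp.coeFn_toLp _
  -- inner products against coherent states
  have hinner : ∀ (z : M) (g : Lp ℂ 2 μ),
      (inner ℂ (Ωlp z) g : ℂ) = ∫ y, (g : M → ℂ) y * Ω y z ∂μ := by
    intro z g
    rw [L2.inner_def]
    refine integral_congr_ae ?_
    filter_upwards [hΩlp_coe z] with y hy
    rw [RCLike.inner_apply', hy, ← h3 y z, mul_comm]
  have hinner_states : ∀ a b, (inner ℂ (Ωlp a) (Ωlp b) : ℂ) = Ω b a := by
    intro a b
    rw [hinner a (Ωlp b),
      show (∫ y, (Ωlp b : M → ℂ) y * Ω y a ∂μ) = ∫ y, Ω b y * Ω y a ∂μ from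
        integral_congr_ae (by filter_upwards [hΩlp_coe b] with y hy; rw [hy])]
    exact h4 b a
  have hnormsq : ∀ a, ‖Ωlp a‖ ^ 2 = 1 := by
    intro a
    rw [← inner_self_eq_norm_sq (𝕜 := ℂ), hinner_states a a, h1 a]
    simp
  have hnorm1 : ∀ a, ‖Ωlp a‖ = 1 := by
    intro a
    nlinarith [hnormsq a, norm_nonneg (Ωlp a)]
  -- continuity of z ↦ Ωlp z
  have hdist : ∀ a b, dist (Ωlp b) (Ωlp a) = Real.sqrt (2 - 2 * (Ω a b).re) := by
    intro a b
    have hsq : ‖Ωlp b - Ωlp a‖ ^ 2 = 2 - 2 * (Ω a b).re := by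
      rw [norm_sub_sq (𝕜 := ℂ), hnormsq, hnormsq, hinner_states b a]
      have : (RCLike.re (Ω a b) : ℝ) = (Ω a b).re := rfl
      rw [this]; ring
    rw [dist_eq_norm, ← Real.sqrt_sq (norm_nonneg (Ωlp b - Ωlp a)), hsq]
  have hcontstate : Continuous Ωlp := by
    rw [continuous_iff_continuousAt]
    intro a
    rw [ContinuousAt, tendsto_iff_dist_tendsto_zero]
    have heq : (fun b => dist (Ωlp b) (Ωlp a)) = fun b => Real.sqrt (2 - 2 * (Ω a b).re) :=
      funext fun b => hdist a b
    rw [heq]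
    have hc : Continuous fun b => Real.sqrt (2 - 2 * (Ω a b).re) := by
      apply Real.continuous_sqrt.comp
      exact continuous_const.sub (continuous_const.mul
        (Complex.continuous_re.comp (hΩcont.comp (Continuous.prodMk_right a))))
    have ht := hc.tendsto a
    simpa [h1 a] using ht
  -- the action of the coherent-state projections
  have hq_state : ∀ z z', qz z' (Ωlp z) = (Ω z z') • (Ωlp z') := by
    intro z z'
    have hc : (∫ w, (Ωlp z : M → ℂ) w * Ω w z' ∂μ) = Ω z z' := by
      rw [show (∫ w, (Ωlp z : M → ℂ) w * Ω w z' ∂μ) = ∫ w, Ω z w * Ω w z' ∂μ from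
        integral_congr_ae (by filter_upwards [hΩlp_coe z] with w hw; rw [hw])]
      exact h4 z z'
    refine Lp.ext ?_
    filter_upwards [hqz z' (Ωlp z), Lp.coeFn_smul (Ω z z') (Ωlp z'), hΩlp_coe z']
      with y hy hy2 hy3
    rw [hy, hc, hy2, Pi.smul_apply, smul_eq_mul, hy3]
  -- `P` kills anything orthogonal to all coherent states
  have hkerP : ∀ Ψ : Lp ℂ 2 μ, (∀ x, (inner ℂ (Ωlp x) Ψ : ℂ) = 0) → P Ψ = 0 := by
    intro Ψ hc
    rw [Lp.eq_zero_iff_ae_eq_zero]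
    filter_upwards [hP Ψ] with x hx
    rw [hx, ← hinner x Ψ, hc x]
    rfl
  -- the closed span of the coherent states
  set Wc : Submodule ℂ (Lp ℂ 2 μ) :=
    (Submodule.span ℂ (Set.range Ωlp)).topologicalClosure with hWcdef
  have hWc_closed : IsClosed (Wc : Set (Lp ℂ 2 μ)) :=
    Submodule.isClosed_topologicalClosure _
  have hstW : ∀ x, Ωlp x ∈ Wc :=
    fun x => Submodule.le_topologicalClosure _ (Submodule.subset_span ⟨x, rfl⟩)
  -- the reproducing identity holds for elements of the closed span
  have hfix : ∀ (z : M) (Ξ : Lp ℂ 2 μ), Ξ ∈ Wc →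
      (inner ℂ (Ωlp z) (P Ξ) : ℂ) = inner ℂ (Ωlp z) Ξ := by
    intro z
    -- integrability of the relevant integrand
    have hcontinner : ∀ Ξ : Lp ℂ 2 μ, Continuous fun w => (inner ℂ (Ωlp w) Ξ : ℂ) :=
      fun Ξ => hcontstate.inner continuous_const
    have hTint : ∀ Ξ : Lp ℂ 2 μ, Integrable (fun w => (inner ℂ (Ωlp w) Ξ : ℂ) * Ω w z) μ := by
      intro Ξ
      refine Integrable.mono' ((hΩnorm_int' z).const_mul ‖Ξ‖)
        (((hcontinner Ξ).aestronglyMeasurable).mul (hΩmeas' z))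
        (Eventually.of_forall fun w => ?_)
      rw [norm_mul]
      refine mul_le_mul_of_nonneg_right ?_ (norm_nonneg _)
      have := norm_inner_le_norm (𝕜 := ℂ) (Ωlp w) Ξ
      rwa [hnorm1 w, one_mul] at this
    -- the functional Ξ ↦ ∫ ⟪Ω_w, Ξ⟫ Ω(w,z) dμ(w) as a linear map
    set L : Lp ℂ 2 μ →ₗ[ℂ] ℂ :=
      { toFun := fun Ξ => ∫ w, (inner ℂ (Ωlp w) Ξ : ℂ) * Ω w z ∂μ
        map_add' := by
          intro a b
          simp_rw [inner_add_right, add_mul]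
          exact integral_add (hTint a) (hTint b)
        map_smul' := by
          intro c a
          simp_rw [inner_smul_right, smul_eq_mul, mul_assoc]
          rw [integral_const_mul]
          rfl } with hLdef
    have hLbound : ∀ Ξ, ‖L Ξ‖ ≤ (∫ w, ‖Ω w z‖ ∂μ) * ‖Ξ‖ := by
      intro Ξ
      have h1' : ‖L Ξ‖ ≤ ∫ w, ‖(inner ℂ (Ωlp w) Ξ : ℂ) * Ω w z‖ ∂μ :=
        norm_integral_le_integral_norm _
      refine h1'.trans ?_
      rw [show (∫ w, ‖Ω w z‖ ∂μ) * ‖Ξ‖ = ∫ w, ‖Ω w z‖ * ‖Ξ‖ ∂μ from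
        (integral_mul_const _ _).symm]
      refine integral_mono (hTint Ξ).norm ((hΩnorm_int' z).mul_const ‖Ξ‖) ?_
      intro w
      show ‖(inner ℂ (Ωlp w) Ξ : ℂ) * Ω w z‖ ≤ ‖Ω w z‖ * ‖Ξ‖
      rw [norm_mul, mul_comm (‖Ω w z‖) (‖Ξ‖)]
      refine mul_le_mul_of_nonneg_right ?_ (norm_nonneg _)
      have := norm_inner_le_norm (𝕜 := ℂ) (Ωlp w) Ξ
      rwa [hnorm1 w, one_mul] at this
    set Tz : Lp ℂ 2 μ →L[ℂ] ℂ := L.mkContinuous _ hLbound with hTzdef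
    have hTz_apply : ∀ Ξ, Tz Ξ = ∫ w, (inner ℂ (Ωlp w) Ξ : ℂ) * Ω w z ∂μ := fun Ξ => rfl
    set D : Lp ℂ 2 μ →L[ℂ] ℂ := Tz - innerSL ℂ (Ωlp z) with hDdef
    have hDstates : ∀ x, D (Ωlp x) = 0 := by
      intro x
      rw [hDdef]
      simp only [ContinuousLinearMap.sub_apply, innerSL_apply_apply]
      rw [hTz_apply, hinner_states z x,
        show (∫ w, (inner ℂ (Ωlp w) (Ωlp x) : ℂ) * Ω w z ∂μ) = ∫ w, Ω x w * Ω w z ∂μ from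
          integral_congr_ae (Eventually.of_forall fun w => by
            show (inner ℂ (Ωlp w) (Ωlp x) : ℂ) * Ω w z = Ω x w * Ω w z
            rw [hinner_states w x]),
        h4 x z, sub_self]
    have hWker : Wc ≤ LinearMap.ker (D : Lp ℂ 2 μ →ₗ[ℂ] ℂ) := by
      rw [hWcdef]
      refine Submodule.topologicalClosure_minimal _ ?_ (ContinuousLinearMap.isClosed_ker D)
      rw [Submodule.span_le]
      rintro _ ⟨x, rfl⟩
      simpa using hDstates x
    intro Ξ hΞ
    have hD0 : Tz Ξ = (inner ℂ (Ωlp z) Ξ : ℂ) := by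
      have := hWker hΞ
      rw [LinearMap.mem_ker, hDdef] at this
      simp only [ContinuousLinearMap.coe_coe, ContinuousLinearMap.sub_apply, innerSL_apply_apply] at this
      exact sub_eq_zero.mp this
    rw [← hD0, hTz_apply]
    rw [hinner z (P Ξ)]
    refine integral_congr_ae ?_
    filter_upwards [hP Ξ] with y hy
    rw [hy, ← hinner y Ξ]
  -- the crux: an element of the range of `P` orthogonal to all coherent states is 0
  have crux : ∀ Ψ : Lp ℂ 2 μ, Ψ ∈ LinearMap.range (P : Lp ℂ 2 μ →ₗ[ℂ] Lp ℂ 2 μ) →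
      (∀ x, (inner ℂ (Ωlp x) Ψ : ℂ) = 0) → Ψ = 0 := by
    intro Ψ hΨ hc
    obtain ⟨Φ, rfl⟩ := hΨ
    haveI : CompleteSpace Wc := hWc_closed.completeSpace_coe
    set Φw : Lp ℂ 2 μ := (Wc.orthogonalProjectionOnto Φ : Lp ℂ 2 μ) with hΦwdef
    have hΦwW : Φw ∈ Wc := SetLike.coe_mem _
    have hΦp : Φ - Φw ∈ Wcᗮ := Submodule.sub_starProjection_mem_orthogonal Φ
    have hPp : P (Φ - Φw) = 0 := by
      refine hkerP _ fun x => ?_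
      exact (Submodule.mem_orthogonal Wc _).mp hΦp _ (hstW x)
    have hPsplit : P Φ = P Φw := by
      have h' := map_sub P Φ Φw
      rw [hPp] at h'
      exact (sub_eq_zero.mp h'.symm)
    have hΦw0 : ∀ x, (inner ℂ (Ωlp x) Φw : ℂ) = 0 := by
      intro x
      have := hc x
      rw [ContinuousLinearMap.coe_coe, hPsplit] at this
      rw [← hfix x Φw hΦwW]
      exact this
    have hΦwzero : Φw = 0 := by
      have hG : Wc ≤ LinearMap.ker ((innerSL ℂ Φw : Lp ℂ 2 μ →L[ℂ] ℂ) : Lp ℂ 2 μ →ₗ[ℂ] ℂ) := by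
        rw [hWcdef]
        refine Submodule.topologicalClosure_minimal _ ?_
          (ContinuousLinearMap.isClosed_ker _)
        rw [Submodule.span_le]
        rintro _ ⟨x, rfl⟩
        have : (inner ℂ Φw (Ωlp x) : ℂ) = 0 := by
          rw [← inner_conj_symm, hΦw0 x, map_zero]
        simpa [this]
      have := hG hΦwW
      rw [LinearMap.mem_ker] at this
      simp only [ContinuousLinearMap.coe_coe, innerSL_apply_apply] at this
      exact inner_self_eq_zero.mp this
    rw [ContinuousLinearMap.coe_coe, hPsplit, hΦwzero, map_zero]
  -- ### main dichotomy
  by_cases hVbot : V = ⊥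
  · exact Or.inl hVbot
  right
  -- find a coherent state in V
  obtain ⟨ψ, hψV, hψne⟩ := Submodule.ne_bot_iff V |>.mp hVbot
  have hz₀ : ∃ z₀, (inner ℂ (Ωlp z₀) ψ : ℂ) ≠ 0 := by
    by_contra h
    push_neg at h
    exact hψne (crux ψ (hVP hψV) h)
  obtain ⟨z₀, hz₀⟩ := hz₀
  have hqψ : qz z₀ ψ = (inner ℂ (Ωlp z₀) ψ : ℂ) • Ωlp z₀ := by
    refine Lp.ext ?_
    filter_upwards [hqz z₀ ψ, Lp.coeFn_smul (inner ℂ (Ωlp z₀) ψ : ℂ) (Ωlp z₀),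
      hΩlp_coe z₀] with y hy hy2 hy3
    rw [hy, hy2, Pi.smul_apply, smul_eq_mul, hy3, ← hinner z₀ ψ]
  have hstate₀ : Ωlp z₀ ∈ V := by
    have hmem : (inner ℂ (Ωlp z₀) ψ : ℂ) • Ωlp z₀ ∈ V := by
      rw [← hqψ]; exact hVinv z₀ ψ hψV
    have := V.smul_mem (inner ℂ (Ωlp z₀) ψ : ℂ)⁻¹ hmem
    rwa [smul_smul, inv_mul_cancel₀ hz₀, one_smul] at this
  -- the set of z with coherent state in V is clopen, hence everything
  have hS_all : ∀ z, Ωlp z ∈ V := by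
    have hclosed : IsClosed {z | Ωlp z ∈ V} := IsClosed.preimage hcontstate hVc
    have hopen : IsOpen {z | Ωlp z ∈ V} := by
      rw [isOpen_iff_mem_nhds]
      intro z hz
      have hUopen : IsOpen {b | Ω z b ≠ 0} := by
        have : Continuous fun b => Ω z b := hΩcont.comp (Continuous.prodMk_right z)
        exact isOpen_compl_singleton.preimage this
      have hzU : z ∈ {b | Ω z b ≠ 0} := by
        simp only [Set.mem_setOf_eq, h1 z]
        exact one_ne_zero
      refine Filter.mem_of_superset (hUopen.mem_nhds hzU) ?_
      intro b hb
      have hmem := hVinv b _ hz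
      rw [hq_state z b] at hmem
      have := V.smul_mem (Ω z b)⁻¹ hmem
      rwa [smul_smul, inv_mul_cancel₀ hb, one_smul] at this
    have huniv : {z | Ωlp z ∈ V} = Set.univ :=
      IsClopen.eq_univ ⟨hclosed, hopen⟩ ⟨z₀, hstate₀⟩
    intro z
    exact Set.eq_univ_iff_forall.mp huniv z
  -- conclude: range P ≤ V
  refine le_antisymm hVP ?_
  rintro Ψ ⟨Φ', rfl⟩
  haveI : CompleteSpace V := hVc.completeSpace_coe
  set v : Lp ℂ 2 μ := (V.orthogonalProjectionOnto (P Φ') : Lp ℂ 2 μ) with hvdef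
  have hv : v ∈ V := SetLike.coe_mem _
  have hw : P Φ' - v ∈ Vᗮ := Submodule.sub_starProjection_mem_orthogonal _
  have hwr : P Φ' - v ∈ LinearMap.range (P : Lp ℂ 2 μ →ₗ[ℂ] Lp ℂ 2 μ) :=
    sub_mem (LinearMap.mem_range_self (P : Lp ℂ 2 μ →ₗ[ℂ] Lp ℂ 2 μ) Φ') (hVP hv)
  have hwzero : P Φ' - v = 0 := by
    refine crux _ hwr fun x => ?_
    exact (Submodule.mem_orthogonal V _).mp hw _ (hS_all x)
  have : P Φ' = v := by rwa [sub_eq_zero] at hwzero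
  rw [ContinuousLinearMap.coe_coe, this]
  exact hv
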